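/- Suppose the treatment W_t is unconfounded given the observed history: f(W_t | full history including all potential outcomes) = f(W_t | H_t), where H_t is the observed history. Then the treatment is unconfounded given the propensity score alone: f(W_t | full history) = f(W_t | e_t), where e_t(w) = f(W_t = w | H_t). -/
import Mathlib


open MeasureTheory

/-- Unconfoundedness given the propensity score: if the conditional density of the treatment
    given the full history `H*` coincides with the conditional density `e w` given the observed
    history `H_t` (unconfoundedness), then it also coincides with the conditional density given
    the σ-algebra generated by the propensity score `e` alone, i.e.
    f(W_t | H*) = f(W_t | σ(e_t)), where f(W_t | σ(e_t)) = E[e_t(w) | σ(e_t)]. -/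
theorem stmt3 {Ω 𝒲 : Type*} {m0 : MeasurableSpace Ω} (μ : Measure Ω) [IsProbabilityMeasure μ]
    (Hstar Ht : MeasurableSpace Ω) (hHt : Ht ≤ Hstar) (hHstar : Hstar ≤ m0)
    (dstar e : 𝒲 → Ω → ℝ)
    (hdstar_meas : ∀ w, StronglyMeasurable[Hstar] (dstar w))
    (he_meas : ∀ w, StronglyMeasurable[Ht] (e w))
    (he_int : ∀ w, Integrable (e w) μ)
    (hgle : MeasurableSpace.comap (fun ω (w : 𝒲) => e w ω) MeasurableSpace.pi ≤ m0)
    -- unconfoundedness: the density given the full history equals the density given Hₜ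
    (hunconf : ∀ w, dstar w =ᵐ[μ] e w) :
    ∀ w : 𝒲,
      dstar w =ᵐ[μ]
        μ[e w | MeasurableSpace.comap (fun ω (w : 𝒲) => e w ω) MeasurableSpace.pi] := by
  intro w
  have hmeas : StronglyMeasurable[MeasurableSpace.comap (fun ω (w : 𝒲) => e w ω)
      MeasurableSpace.pi] (e w) := by
    refine Measurable.stronglyMeasurable ?_
    have : Measurable[MeasurableSpace.pi] (fun f : 𝒲 → ℝ => f w) := measurable_pi_apply w
    exact this.comp (Measurable.of_comap_le le_rfl)
  have hce := (condExp_of_stronglyMeasurable hgle hmeas (he_int w)).symm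
  calc dstar w =ᵐ[μ] e w := hunconf w
    _ = _ := hce
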